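/- Let T₀ be the middle real root of 4x³ − 30x + 27 and define u(T) = (−8T³ + 48T² − 60T + 27)/(6T²). Then u(T₀) equals the smallest root of 27x³ − 498x² + 1164x − 722, and T₀ minimizes u on the interval [1, 3/2]. -/

import Mathlib

theorem middle_root_minimizes (T0 : ℝ)
    (hroot : 4 * T0 ^ 3 - 30 * T0 + 27 = 0)
    (hmid : ∃ a b : ℝ, a < T0 ∧ T0 < b ∧
      4 * a ^ 3 - 30 * a + 27 = 0 ∧ 4 * b ^ 3 - 30 * b + 27 = 0) :
    IsLeast {x : ℝ | 27 * x ^ 3 - 498 * x ^ 2 + 1164 * x - 722 = 0}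
      ((-8 * T0 ^ 3 + 48 * T0 ^ 2 - 60 * T0 + 27) / (6 * T0 ^ 2)) ∧
    ∀ T ∈ Set.Icc (1 : ℝ) (3 / 2),
      (-8 * T0 ^ 3 + 48 * T0 ^ 2 - 60 * T0 + 27) / (6 * T0 ^ 2) ≤
      (-8 * T ^ 3 + 48 * T ^ 2 - 60 * T + 27) / (6 * T ^ 2) := by
  obtain ⟨a, b, hab1, hab2, ha, hb⟩ := hmid
  -- bounds on T0
  have hge : -3 ≤ T0 := by
    by_contra h
    push_neg at h
    have ha3 : a < -3 := by linarith
    have key : (T0 - a) * (4*(T0^2 + T0*a + a^2) - 30) = 0 := by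
      linear_combination hroot - ha
    have h1 : 0 < T0 - a := by linarith
    have h2 : 0 < 4*(T0^2 + T0*a + a^2) - 30 := by
      nlinarith [mul_pos (by linarith : (0:ℝ) < -T0 - 3) (by linarith : (0:ℝ) < -a - 3),
        sq_nonneg (T0 + 3), sq_nonneg (a + 3)]
    nlinarith [mul_pos h1 h2]
  have hle : T0 ≤ 2 := by
    by_contra h
    push_neg at h
    have hb2 : 2 < b := by linarith
    have key : (b - T0) * (4*(b^2 + b*T0 + T0^2) - 30) = 0 := by
      linear_combination hb - hroot
    have h1 : 0 < b - T0 := by linarith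
    have h2 : 0 < 4*(b^2 + b*T0 + T0^2) - 30 := by
      nlinarith [mul_pos (by linarith : (0:ℝ) < b - 2) (by linarith : (0:ℝ) < T0 - 2),
        sq_nonneg (b - 2), sq_nonneg (T0 - 2)]
    nlinarith [mul_pos h1 h2]
  have hgt1 : 1 < T0 := by
    by_contra h
    push_neg at h
    nlinarith [mul_nonneg (mul_nonneg (by linarith : (0:ℝ) ≤ 1 - T0)
      (by linarith : (0:ℝ) ≤ T0 + 3)) (by linarith : (0:ℝ) ≤ 2 - T0)]
  have hlt : T0 < 106/100 := by
    by_contra h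
    push_neg at h
    nlinarith [mul_nonneg (by linarith : (0:ℝ) ≤ T0 - 106/100) (by linarith : (0:ℝ) ≤ 2 - T0),
      mul_nonneg (mul_nonneg (by linarith : (0:ℝ) ≤ T0 - 106/100)
        (by linarith : (0:ℝ) ≤ T0 - 106/100)) (by linarith : (0:ℝ) ≤ 2 - T0),
      sq_nonneg (T0 - 106/100), sq_nonneg (2 - T0)]
  have hT0pos : (0:ℝ) < T0 := by linarith
  have h6 : (0:ℝ) < 6 * T0 ^ 2 := by positivity
  set y : ℝ := (-8 * T0 ^ 3 + 48 * T0 ^ 2 - 60 * T0 + 27) / (6 * T0 ^ 2) with hy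
  -- y is a root of the cubic
  have hmem : 27 * y ^ 3 - 498 * y ^ 2 + 1164 * y - 722 = 0 := by
    rw [hy]
    have hne : (6 * T0 ^ 2) ≠ 0 := ne_of_gt h6
    field_simp
    linear_combination ((-3456)*T0^6 + (14400)*T0^5 + (12960)*T0^4 + (-128412)*T0^3 + (194400)*T0^2 + (-109350)*T0^1 + (19683)*T0^0) * hroot
  -- y ≤ 1.19
  have hy19 : y ≤ 119/100 := by
    rw [hy, div_le_iff₀ h6]
    nlinarith [hroot, mul_pos (mul_pos hT0pos (by linarith : (0:ℝ) < 107/100 - T0))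
      (by linarith : (0:ℝ) < 2 - T0)]
  refine ⟨⟨hmem, ?_⟩, ?_⟩
  · -- lower bound
    intro x hx
    simp only [Set.mem_setOf_eq] at hx
    rcases le_or_gt (12/10 : ℝ) x with hx12 | hx12
    · linarith
    · by_contra hcon
      push_neg at hcon
      have key : (y - x) * (27*(y^2 + x*y + x^2) - 498*(y + x) + 1164) = 0 := by
        linear_combination hmem - hx
      have h1 : 0 < y - x := by linarith
      have h2 : 0 < 27*(y^2 + x*y + x^2) - 498*(y + x) + 1164 := by
        nlinarith [mul_nonneg (by linarith : (0:ℝ) ≤ 6/5 - x) (by linarith : (0:ℝ) ≤ 6/5 - y),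
          sq_nonneg (6/5 - x), sq_nonneg (6/5 - y)]
      nlinarith [mul_pos h1 h2]
  · -- minimization
    intro T hT
    obtain ⟨hT1, hT2⟩ := hT
    have hTpos : (0:ℝ) < T := by linarith
    have h6T : (0:ℝ) < 6 * T ^ 2 := by positivity
    rw [hy, div_le_div_iff₀ h6 h6T]
    have hlast : (0:ℝ) ≤ 30 - 4*T0^2 - 8*T0*T := by
      nlinarith [mul_nonneg (by linarith : (0:ℝ) ≤ 106/100 - T0) (by linarith : (0:ℝ) ≤ 3/2 - T)]
    have hfac : (0:ℝ) ≤ T0 * (T - T0)^2 * (30 - 4*T0^2 - 8*T0*T) :=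
      mul_nonneg (mul_nonneg hT0pos.le (sq_nonneg _)) hlast
    have key : (-8 * T ^ 3 + 48 * T ^ 2 - 60 * T + 27) * (6 * T0 ^ 2)
        - (-8 * T0 ^ 3 + 48 * T0 ^ 2 - 60 * T0 + 27) * (6 * T ^ 2)
        = 6 * (T0 * (T - T0)^2 * (30 - 4*T0^2 - 8*T0*T)) := by
      linear_combination (6*(T0^2 - T^2)) * hroot
    linarith [hfac, key]
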